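/- Every finite dimensional Banach space X with numerical index n(X) > 0 has the local point property L_{p,p}-nu: for every ε > 0 and every state (x,x*) ∈ Π(X) there is η > 0 such that whenever T ∈ L(X) with v(T) = 1 satisfies |x*(Tx)| > 1 − η, there exists S ∈ L(X) with v(S) = 1, |x*(Sx)| = 1, and ‖S − T‖ < ε. -/

import Mathlib

noncomputable section

open Filter Topology

variable (𝕜 : Type*) [RCLike 𝕜] (X : Type*) [NormedAddCommGroup X] [NormedSpace 𝕜 X]

/-- `(x, f)` is a state of `X`: `x ∈ S_X`, `f ∈ S_{X*}`, `f x = 1`. -/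
def IsState (x : X) (f : X →L[𝕜] 𝕜) : Prop :=
  ‖x‖ = 1 ∧ ‖f‖ = 1 ∧ f x = 1

/-- The numerical radius `v(T) = sup {|f (T x)| : (x, f) ∈ Π(X)}`. -/
def nrad (T : X →L[𝕜] X) : ℝ :=
  sSup {r : ℝ | ∃ x f, IsState 𝕜 X x f ∧ r = ‖f (T x)‖}

/-- The numerical index `n(X) = inf {v(T) : ‖T‖ = 1}`. -/
def nindex : ℝ :=
  sInf {r : ℝ | ∃ T : X →L[𝕜] X, ‖T‖ = 1 ∧ r = nrad 𝕜 X T}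

variable {𝕜 X}

lemma nrad_bddAbove (T : X →L[𝕜] X) :
    BddAbove {r : ℝ | ∃ x f, IsState 𝕜 X x f ∧ r = ‖f (T x)‖} := by
  refine ⟨‖T‖, ?_⟩
  rintro r ⟨x, f, ⟨hx, hf, _⟩, rfl⟩
  calc ‖f (T x)‖ ≤ ‖f‖ * ‖T x‖ := f.le_opNorm _
    _ ≤ ‖f‖ * (‖T‖ * ‖x‖) := by gcongr; exact T.le_opNorm x
    _ = ‖T‖ := by rw [hx, hf]; ring

lemma le_nrad {x : X} {f : X →L[𝕜] 𝕜} (hxf : IsState 𝕜 X x f) (T : X →L[𝕜] X) :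
    ‖f (T x)‖ ≤ nrad 𝕜 X T :=
  le_csSup (nrad_bddAbove T) ⟨x, f, hxf, rfl⟩

lemma nrad_le {T : X →L[𝕜] X} {c : ℝ} (hs : ∃ x f, IsState 𝕜 X x f)
    (h : ∀ x f, IsState 𝕜 X x f → ‖f (T x)‖ ≤ c) : nrad 𝕜 X T ≤ c := by
  obtain ⟨x, f, hxf⟩ := hs
  exact csSup_le ⟨_, x, f, hxf, rfl⟩ (by rintro r ⟨y, g, hyg, rfl⟩; exact h y g hyg)

lemma nrad_nonneg (hs : ∃ x f, IsState 𝕜 X x f) (T : X →L[𝕜] X) :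
    0 ≤ nrad 𝕜 X T := by
  obtain ⟨x, f, hxf⟩ := hs
  exact le_trans (norm_nonneg _) (le_nrad hxf T)

lemma nrad_sub_le (hs : ∃ x f, IsState 𝕜 X x f) (S T : X →L[𝕜] X) :
    nrad 𝕜 X S ≤ nrad 𝕜 X T + ‖S - T‖ := by
  refine nrad_le hs fun y g hyg => ?_
  have hy : g (S y) = g (T y) + g ((S - T) y) := by
    simp
  calc ‖g (S y)‖ ≤ ‖g (T y)‖ + ‖g ((S - T) y)‖ := by
        rw [hy]; exact norm_add_le _ _
    _ ≤ nrad 𝕜 X T + ‖S - T‖ := by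
        gcongr
        · exact le_nrad hyg T
        · calc ‖g ((S - T) y)‖ ≤ ‖g‖ * ‖(S - T) y‖ := g.le_opNorm _
            _ ≤ ‖g‖ * (‖S - T‖ * ‖y‖) := by gcongr; exact (S - T).le_opNorm y
            _ = ‖S - T‖ := by rw [hyg.1, hyg.2.1]; ring

lemma nindex_mul_norm_le (hs : ∃ x f, IsState 𝕜 X x f) (T : X →L[𝕜] X) :
    nindex 𝕜 X * ‖T‖ ≤ nrad 𝕜 X T := by
  rcases eq_or_ne T 0 with rfl | hT
  · simpa using nrad_nonneg hs (0 : X →L[𝕜] X)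
  · have hc : 0 < ‖T‖ := norm_pos_iff.mpr hT
    set c : ℝ := ‖T‖ with hcdef
    set T' : X →L[𝕜] X := ((c⁻¹ : ℝ) : 𝕜) • T with hT'
    have hnT' : ‖T'‖ = 1 := by
      rw [hT']
      rw [norm_smul ((c⁻¹ : ℝ) : 𝕜) T, RCLike.norm_ofReal, abs_of_pos (inv_pos.mpr hc)]
      field_simp
      exact hcdef.symm
    have h1 : nindex 𝕜 X ≤ nrad 𝕜 X T' := by
      refine csInf_le ⟨0, ?_⟩ ⟨T', hnT', rfl⟩
      rintro r ⟨U, _, rfl⟩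
      exact nrad_nonneg hs U
    have h2 : nrad 𝕜 X T' ≤ c⁻¹ * nrad 𝕜 X T := by
      refine nrad_le hs fun y g hyg => ?_
      have : g (T' y) = ((c⁻¹ : ℝ) : 𝕜) * g (T y) := by
        simp [hT']
      rw [this, norm_mul, RCLike.norm_ofReal, abs_of_pos (inv_pos.mpr hc)]
      exact mul_le_mul_of_nonneg_left (le_nrad hyg T) (inv_nonneg.mpr hc.le)
    have := h1.trans h2
    calc nindex 𝕜 X * c = (c⁻¹ * nrad 𝕜 X T) * c + (nindex 𝕜 X - c⁻¹ * nrad 𝕜 X T) * c := by ring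
      _ ≤ (c⁻¹ * nrad 𝕜 X T) * c + 0 := by
          nlinarith
      _ = nrad 𝕜 X T := by field_simp; exact add_zero _

/-- every finite dimensional Banach space with `n(X) > 0` has the local
point property L_{p,p}-nu. -/
theorem stmt11 [CompleteSpace X] [FiniteDimensional 𝕜 X] (h : 0 < nindex 𝕜 X) :
    ∀ ε : ℝ, 0 < ε → ∀ (x : X) (f : X →L[𝕜] 𝕜), IsState 𝕜 X x f →
      ∃ η : ℝ, 0 < η ∧ ∀ T : X →L[𝕜] X, nrad 𝕜 X T = 1 → 1 - η < ‖f (T x)‖ →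
        ∃ S : X →L[𝕜] X, nrad 𝕜 X S = 1 ∧ ‖f (S x)‖ = 1 ∧ ‖S - T‖ < ε := by
  intro ε hε x f hxf
  by_contra hcon
  push_neg at hcon
  have hs : ∃ x f, IsState 𝕜 X x f := ⟨x, f, hxf⟩
  choose T hT1 hT2 hT3 using fun n : ℕ =>
    hcon (1 / (n + 1)) (by positivity)
  -- all T n lie in a compact ball
  haveI : ProperSpace (X →L[𝕜] X) := FiniteDimensional.proper 𝕜 _
  have hmem : ∀ n, T n ∈ Metric.closedBall (0 : X →L[𝕜] X) (nindex 𝕜 X)⁻¹ := by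
    intro n
    rw [Metric.mem_closedBall, dist_zero_right]
    have h1 : nindex 𝕜 X * ‖T n‖ ≤ 1 := by
      rw [← hT1 n]; exact nindex_mul_norm_le hs (T n)
    calc ‖T n‖ = (nindex 𝕜 X)⁻¹ * (nindex 𝕜 X * ‖T n‖) := by field_simp
      _ ≤ (nindex 𝕜 X)⁻¹ * 1 := mul_le_mul_of_nonneg_left h1 (inv_nonneg.mpr h.le)
      _ = (nindex 𝕜 X)⁻¹ := mul_one _
  obtain ⟨S, _, φ, hφ, hconv⟩ :=
    (isCompact_closedBall (0 : X →L[𝕜] X) (nindex 𝕜 X)⁻¹).tendsto_subseq hmem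
  have hdist : Tendsto (fun k => ‖S - T (φ k)‖) atTop (𝓝 0) := by
    have := tendsto_iff_norm_sub_tendsto_zero.mp hconv
    simpa [norm_sub_rev] using this
  -- nrad S = 1
  have hnradS : nrad 𝕜 X S = 1 := by
    have key : ∀ k, |nrad 𝕜 X S - 1| ≤ ‖S - T (φ k)‖ := by
      intro k
      rw [abs_sub_le_iff]
      constructor
      · have := nrad_sub_le hs S (T (φ k))
        rw [hT1 (φ k)] at this
        linarith
      · have := nrad_sub_le hs (T (φ k)) S
        rw [hT1 (φ k), norm_sub_rev] at this
        linarith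
    have h0 : |nrad 𝕜 X S - 1| ≤ 0 := ge_of_tendsto' hdist key
    have := abs_nonneg (nrad 𝕜 X S - 1)
    have : |nrad 𝕜 X S - 1| = 0 := le_antisymm h0 this
    have := abs_eq_zero.mp this
    linarith
  -- ‖f (S x)‖ = 1
  have htend : Tendsto (fun k => ‖f (T (φ k) x)‖) atTop (𝓝 ‖f (S x)‖) := by
    have h1 : Tendsto (fun k => T (φ k) x) atTop (𝓝 (S x)) :=
      ((ContinuousLinearMap.apply 𝕜 X x).continuous.tendsto S).comp hconv
    exact ((f.continuous.tendsto (S x)).comp h1).norm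
  have hfS : ‖f (S x)‖ = 1 := by
    have hub : ‖f (S x)‖ ≤ 1 := by
      have := le_nrad hxf S
      rwa [hnradS] at this
    have hlow : (1 : ℝ) ≤ ‖f (S x)‖ := by
      have hlim : Tendsto (fun k : ℕ => 1 - 1 / ((k : ℝ) + 1)) atTop (𝓝 1) := by
        have := tendsto_one_div_add_atTop_nhds_zero_nat (𝕜 := ℝ)
        simpa using (tendsto_const_nhds (x := (1:ℝ))).sub this
      refine le_of_tendsto_of_tendsto' hlim htend fun k => ?_
      have hk : (k : ℝ) ≤ (φ k : ℝ) := Nat.cast_le.mpr hφ.le_apply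
      have : 1 / ((φ k : ℝ) + 1) ≤ 1 / ((k : ℝ) + 1) := by
        apply one_div_le_one_div_of_le
        · positivity
        · linarith
      have h2 := hT2 (φ k)
      calc (1 : ℝ) - 1 / ((k : ℝ) + 1) ≤ 1 - 1 / ((φ k : ℝ) + 1) := by linarith
        _ ≤ ‖f (T (φ k) x)‖ := le_of_lt (by exact_mod_cast h2)
    linarith
  -- contradiction
  have hεle : ∀ k, ε ≤ ‖S - T (φ k)‖ := fun k => hT3 (φ k) S hnradS hfS
  have : ε ≤ 0 := ge_of_tendsto' hdist hεle
  linarith
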